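/- arXiv:2112.01804 — 6 statements merged into one kernel-verified Lean document; each statement's English description precedes it below -/
import Mathlib

section
/- If E[Y²] < ∞, then E[(Y − f̄(X))²] = E[Y·(Y − Z)]; that is, the minimal mean squared distance between Y and Borel functions of X equals the expectation of Y(Y − Z). -/
open MeasureTheory ProbabilityTheory Filter

private lemma integrable_mul_of_sq {α : Type*} [MeasurableSpace α] {ν : Measure α} {f g : α → ℝ}
    (hf : AEStronglyMeasurable f ν) (hg : AEStronglyMeasurable g ν)
    (hf2 : Integrable (fun x => f x ^ 2) ν) (hg2 : Integrable (fun x => g x ^ 2) ν) :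
    Integrable (fun x => f x * g x) ν := by
  refine ((hf2.add hg2).div_const 2).mono' (hf.mul hg) (Eventually.of_forall fun x => ?_)
  simp only [Pi.add_apply]
  rw [Real.norm_eq_abs, abs_mul]
  nlinarith [sq_nonneg (|f x| - |g x|), sq_abs (f x), sq_abs (g x)]

private lemma sq_integral_le {α : Type*} [MeasurableSpace α] {ν : Measure α}
    [IsProbabilityMeasure ν] {f : α → ℝ} (hf : MemLp f 2 ν) :
    (∫ x, f x ∂ν) ^ 2 ≤ ∫ x, f x ^ 2 ∂ν := by
  have h := variance_nonneg f ν
  rw [variance_eq_sub hf] at h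
  have : (ν[f ^ 2] : ℝ) = ∫ x, f x ^ 2 ∂ν := by rfl
  linarith [h, this ▸ h]

/-- If `E[Y²] < ∞`, then `E[(Y − f̄(X))²] = E[Y·(Y − Z)]`, where `Y = h(X,V)`, `Z = h(X,Ṽ)` with
`X, V, Ṽ` mutually independent, `Ṽ ~ V`, and `f̄(X)` a version of `E[Y | X]`. -/
theorem stmt_1 {Ω : Type*} [MeasurableSpace Ω] {μ : Measure Ω} [IsProbabilityMeasure μ]
    {d k : ℕ} {X : Ω → (Fin d → ℝ)} {V Vt : Ω → (Fin k → ℝ)}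
    (hX : Measurable X) (hV : Measurable V) (hVt : Measurable Vt)
    (h_ident : Measure.map Vt μ = Measure.map V μ)
    (h_indep : iIndepFun
      (β := Fin.cons (Fin d → ℝ) (Fin.cons (Fin k → ℝ) (Fin.cons (Fin k → ℝ) finZeroElim)))
      (m := Fin.cons (inferInstance : MeasurableSpace (Fin d → ℝ))
        (Fin.cons (inferInstance : MeasurableSpace (Fin k → ℝ))
          (Fin.cons (inferInstance : MeasurableSpace (Fin k → ℝ)) finZeroElim)))
      (Fin.cons X (Fin.cons V (Fin.cons Vt finZeroElim))) μ)
    {h : (Fin d → ℝ) × (Fin k → ℝ) → ℝ} (hh : Measurable h)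
    {Y Z : Ω → ℝ} (hY : Y = fun ω => h (X ω, V ω)) (hZ : Z = fun ω => h (X ω, Vt ω))
    {fbar : (Fin d → ℝ) → ℝ} (hfbar_meas : Measurable fbar)
    (hfbar : (fun ω => fbar (X ω)) =ᵐ[μ] μ[Y | MeasurableSpace.comap X inferInstance])
    (hY2 : Integrable (fun ω => (Y ω) ^ 2) μ) :
    ∫ ω, (Y ω - fbar (X ω)) ^ 2 ∂μ = ∫ ω, Y ω * (Y ω - Z ω) ∂μ := by
  subst hY hZ
  set Y : Ω → ℝ := fun ω => h (X ω, V ω) with hYdef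
  set Z : Ω → ℝ := fun ω => h (X ω, Vt ω) with hZdef
  set μX : Measure (Fin d → ℝ) := μ.map X with hμX
  set μV : Measure (Fin k → ℝ) := μ.map V with hμV
  haveI : IsProbabilityMeasure μX := Measure.isProbabilityMeasure_map hX.aemeasurable
  haveI : IsProbabilityMeasure μV := Measure.isProbabilityMeasure_map hV.aemeasurable
  -- measurability
  have hYm : Measurable Y := hh.comp (hX.prodMk hV)
  have hZm : Measurable Z := hh.comp (hX.prodMk hVt)
  have hYL2 : MemLp Y 2 μ := (memLp_two_iff_integrable_sq hYm.aestronglyMeasurable).2 hY2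
  have hYint : Integrable Y μ := hYL2.integrable one_le_two
  -- independence facts
  have hIVVt : IndepFun V Vt μ := h_indep.indepFun (i := 1) (j := 2) (by decide)
  have hIXV : IndepFun X V μ := (h_indep.indepFun (i := 0) (j := 1) (by decide))
  have hIXVt : IndepFun X Vt μ := (h_indep.indepFun (i := 0) (j := 2) (by decide))
  have hIXW : IndepFun X (fun ω => (V ω, Vt ω)) μ :=
    (h_indep.indepFun_prodMk (fun i => by
      refine Fin.cases hX (fun j => ?_) i
      refine Fin.cases hV (fun l => ?_) j
      exact Fin.cases hVt (fun m => m.elim0) l) 1 2 0 (by decide) (by decide)).symm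
  -- law computations
  have hmapVVt : μ.map (fun ω => (V ω, Vt ω)) = μV.prod μV := by
    rw [(indepFun_iff_map_prod_eq_prod_map_map hV.aemeasurable hVt.aemeasurable).1 hIVVt,
      h_ident]
  have hmapXW : μ.map (fun ω => (X ω, (V ω, Vt ω))) = μX.prod (μV.prod μV) := by
    rw [(indepFun_iff_map_prod_eq_prod_map_map hX.aemeasurable
      (hV.prodMk hVt).aemeasurable).1 hIXW, hmapVVt]
  have hmapXV : μ.map (fun ω => (X ω, V ω)) = μX.prod μV :=
    (indepFun_iff_map_prod_eq_prod_map_map hX.aemeasurable hV.aemeasurable).1 hIXV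
  have hmapXVt : μ.map (fun ω => (X ω, Vt ω)) = μX.prod μV := by
    rw [(indepFun_iff_map_prod_eq_prod_map_map hX.aemeasurable hVt.aemeasurable).1 hIXVt,
      h_ident]
  -- integrability of h and h² on the product
  have hH2int : Integrable (fun p => h p ^ 2) (μX.prod μV) := by
    rw [← hmapXV, integrable_map_measure (hh.pow_const 2).aestronglyMeasurable
      (hX.prodMk hV).aemeasurable]
    exact hY2
  have hHL2 : MemLp h 2 (μX.prod μV) :=
    (memLp_two_iff_integrable_sq hh.aestronglyMeasurable).2 hH2int
  have hHint : Integrable h (μX.prod μV) := hHL2.integrable one_le_two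
  -- Z² integrable
  have hZ2 : Integrable (fun ω => Z ω ^ 2) μ := by
    have := hH2int
    rw [← hmapXVt, integrable_map_measure (hh.pow_const 2).aestronglyMeasurable
      (hX.prodMk hVt).aemeasurable] at this
    exact this
  -- the regression function g
  set g : (Fin d → ℝ) → ℝ := fun x => ∫ v, h (x, v) ∂μV with hgdef
  have hgsm : StronglyMeasurable g := hh.stronglyMeasurable.integral_prod_right'
  have hgmeas : Measurable g := hgsm.measurable
  -- g² is integrable on μX
  have hg2int : Integrable (fun x => g x ^ 2) μX := by
    have hBint : Integrable (fun x => ∫ v, h (x, v) ^ 2 ∂μV) μX :=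
      hH2int.integral_prod_left
    refine hBint.mono' ((hgsm.aestronglyMeasurable).pow 2) ?_
    filter_upwards [hH2int.prod_right_ae] with x hx
    have hx2 : MemLp (fun v => h (x, v)) 2 μV :=
      (memLp_two_iff_integrable_sq
        (hh.comp measurable_prodMk_left).aestronglyMeasurable).2 hx
    have hle : (∫ v, h (x, v) ∂μV) ^ 2 ≤ ∫ v, h (x, v) ^ 2 ∂μV := sq_integral_le hx2
    rw [Real.norm_eq_abs, abs_of_nonneg (sq_nonneg _)]
    exact hle
  have hgL2 : MemLp g 2 μX := (memLp_two_iff_integrable_sq hgsm.aestronglyMeasurable).2 hg2int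
  have hgint : Integrable g μX := hgL2.integrable one_le_two
  -- transfer to Ω
  have hgX2int : Integrable (fun ω => g (X ω) ^ 2) μ := by
    have := hg2int
    rw [hμX, integrable_map_measure ((hgmeas.pow_const 2).aestronglyMeasurable)
      hX.aemeasurable] at this
    exact this
  have hgXint : Integrable (fun ω => g (X ω)) μ := by
    have := hgint
    rw [hμX, integrable_map_measure hgmeas.aestronglyMeasurable hX.aemeasurable] at this
    exact this
  -- g ∘ X is a version of the conditional expectation
  have hgX_ce : (fun ω => g (X ω)) =ᵐ[μ] μ[Y | MeasurableSpace.comap X inferInstance] := by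
    refine ae_eq_condExp_of_forall_setIntegral_eq hX.comap_le hYint
      (fun s _ _ => hgXint.integrableOn) (fun s hs _ => ?_) ?_
    · obtain ⟨A, hA, rfl⟩ := hs
      have h1 : ∫ x in A, g x ∂μX = ∫ ω in X ⁻¹' A, g (X ω) ∂μ :=
        setIntegral_map hA hgmeas.aestronglyMeasurable hX.aemeasurable
      have h2 : ∫ p in A ×ˢ Set.univ, h p ∂(μX.prod μV)
          = ∫ ω in (fun ω => (X ω, V ω)) ⁻¹' (A ×ˢ Set.univ), h (X ω, V ω) ∂μ := by
        rw [← hmapXV]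
        exact setIntegral_map (hA.prod MeasurableSet.univ) hh.aestronglyMeasurable
          (hX.prodMk hV).aemeasurable
      have hpre : (fun ω => (X ω, V ω)) ⁻¹' (A ×ˢ Set.univ) = X ⁻¹' A := by
        ext ω; simp
      have h3 : ∫ p in A ×ˢ Set.univ, h p ∂(μX.prod μV) = ∫ x in A, g x ∂μX := by
        rw [← Measure.prod_restrict A Set.univ, Measure.restrict_univ] at *
        have hint : Integrable h ((μX.restrict A).prod μV) := by
          have := hHint.integrableOn (s := A ×ˢ Set.univ)
          rwa [IntegrableOn, ← Measure.prod_restrict, Measure.restrict_univ] at this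
        rw [integral_prod _ hint]
      rw [h1.symm, ← h3, h2, hpre]
    · exact ((hgmeas.comp (measurable_iff_comap_le.mpr le_rfl)).stronglyMeasurable).aestronglyMeasurable
  have hfg : (fun ω => fbar (X ω)) =ᵐ[μ] fun ω => g (X ω) := hfbar.trans hgX_ce.symm
  -- the key constant
  set c : ℝ := ∫ x, g x ^ 2 ∂μX with hcdef
  -- ∫ Y · g(X) = c
  have hYgint : Integrable (fun ω => Y ω * g (X ω)) μ :=
    integrable_mul_of_sq hYm.aestronglyMeasurable
      (hgmeas.comp hX).aestronglyMeasurable hY2 hgX2int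
  have hYg : ∫ ω, Y ω * g (X ω) ∂μ = c := by
    have hm1 : Measurable (fun p : (Fin d → ℝ) × (Fin k → ℝ) => h p * g p.1) :=
      hh.mul (hgmeas.comp measurable_fst)
    have hPint : Integrable (fun p : (Fin d → ℝ) × (Fin k → ℝ) => h p * g p.1) (μX.prod μV) := by
      rw [← hmapXV, integrable_map_measure hm1.aestronglyMeasurable
        (hX.prodMk hV).aemeasurable]
      exact hYgint
    have e1 : ∫ ω, Y ω * g (X ω) ∂μ
        = ∫ p, h p * g p.1 ∂(μX.prod μV) := by
      rw [← hmapXV, integral_map (hX.prodMk hV).aemeasurable hm1.aestronglyMeasurable]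
    rw [e1, integral_prod _ hPint]
    simp only [integral_mul_const]
    rw [hcdef]
    congr 1
    ext x
    rw [sq]
  -- ∫ Y · Z = c
  have hYZint : Integrable (fun ω => Y ω * Z ω) μ :=
    integrable_mul_of_sq hYm.aestronglyMeasurable hZm.aestronglyMeasurable hY2 hZ2
  have hYZ : ∫ ω, Y ω * Z ω ∂μ = c := by
    set F : (Fin d → ℝ) × ((Fin k → ℝ) × (Fin k → ℝ)) → ℝ :=
      fun p => h (p.1, p.2.1) * h (p.1, p.2.2) with hFdef
    have hFmeas : Measurable F :=
      (hh.comp (measurable_fst.prodMk (measurable_fst.comp measurable_snd))).mul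
        (hh.comp (measurable_fst.prodMk (measurable_snd.comp measurable_snd)))
    have hFint : Integrable F (μX.prod (μV.prod μV)) := by
      rw [← hmapXW, integrable_map_measure hFmeas.aestronglyMeasurable
        (hX.prodMk (hV.prodMk hVt)).aemeasurable]
      exact hYZint
    have e1 : ∫ ω, Y ω * Z ω ∂μ = ∫ p, F p ∂(μX.prod (μV.prod μV)) := by
      rw [← hmapXW, integral_map (hX.prodMk (hV.prodMk hVt)).aemeasurable
        hFmeas.aestronglyMeasurable]
    rw [e1, integral_prod _ hFint]
    have e2 : ∀ x, (∫ q, F (x, q) ∂(μV.prod μV)) = g x ^ 2 := by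
      intro x
      have := integral_prod_mul (μ := μV) (ν := μV)
        (f := fun v => h (x, v)) (g := fun v => h (x, v))
      simpa [hFdef, sq] using this
    rw [hcdef]
    exact integral_congr_ae (Eventually.of_forall e2)
  -- final computation
  have lhs_eq : ∫ ω, (Y ω - fbar (X ω)) ^ 2 ∂μ = ∫ ω, (Y ω - g (X ω)) ^ 2 ∂μ := by
    refine integral_congr_ae ?_
    filter_upwards [hfg] with ω hω
    rw [hω]
  have expand : ∫ ω, (Y ω - g (X ω)) ^ 2 ∂μ
      = ∫ ω, Y ω ^ 2 ∂μ - 2 * ∫ ω, Y ω * g (X ω) ∂μ + ∫ ω, g (X ω) ^ 2 ∂μ := by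
    have : (fun ω => (Y ω - g (X ω)) ^ 2)
        = fun ω => Y ω ^ 2 - 2 * (Y ω * g (X ω)) + g (X ω) ^ 2 := by
      funext ω; ring
    have h2 : Integrable (fun ω => 2 * (Y ω * g (X ω))) μ := hYgint.const_mul 2
    have h1 : Integrable (fun ω => Y ω ^ 2 - 2 * (Y ω * g (X ω))) μ := hY2.sub h2
    rw [this, integral_add h1 hgX2int, integral_sub hY2 h2, integral_const_mul]
  have hgX2val : ∫ ω, g (X ω) ^ 2 ∂μ = c := by
    rw [hcdef, hμX, integral_map hX.aemeasurable
      ((hgmeas.pow_const 2)).aestronglyMeasurable]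
  have rhs_eq : ∫ ω, Y ω * (Y ω - Z ω) ∂μ = ∫ ω, Y ω ^ 2 ∂μ - c := by
    have : (fun ω => Y ω * (Y ω - Z ω)) = fun ω => Y ω ^ 2 - Y ω * Z ω := by
      funext ω; ring
    rw [this, integral_sub hY2 hYZint, hYZ]
  rw [lhs_eq, expand, hYg, hgX2val, rhs_eq]
  ring
end

section
/- If E[Y²] < ∞ and f̂ : ℝ^d → ℝ is a Borel function with E[f̂(X)²] < ∞, then the squared L²-approximation error satisfies E[(f̂(X) − f̄(X))²] = E[Y·Z + f̂(X)·(f̂(X) − Y − Z)]. -/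
open MeasureTheory ProbabilityTheory Filter

private lemma integrable_mul_of_memL2 {α : Type*} [MeasurableSpace α] {μ : Measure α}
    {f g : α → ℝ} (hf : MemLp f 2 μ) (hg : MemLp g 2 μ) :
    Integrable (fun x => f x * g x) μ := by
  have h := MemLp.smul (p := 2) (q := 2) (r := 1) (φ := f) hg hf
  rw [memLp_one_iff_integrable] at h
  exact h

/-- If `E[Y²] < ∞` and `f̂` is Borel with `E[f̂(X)²] < ∞`, then
`E[(f̂(X) − f̄(X))²] = E[Y·Z + f̂(X)·(f̂(X) − Y − Z)]`. -/
theorem stmt_2 {Ω : Type*} [MeasurableSpace Ω] {μ : Measure Ω} [IsProbabilityMeasure μ]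
    {d k : ℕ} {X : Ω → (Fin d → ℝ)} {V Vt : Ω → (Fin k → ℝ)}
    (hX : Measurable X) (hV : Measurable V) (hVt : Measurable Vt)
    (h_ident : Measure.map Vt μ = Measure.map V μ)
    (h_indep : iIndepFun
      (β := Fin.cons (Fin d → ℝ) (Fin.cons (Fin k → ℝ) (Fin.cons (Fin k → ℝ) finZeroElim)))
      (m := Fin.cons (inferInstance : MeasurableSpace (Fin d → ℝ))
        (Fin.cons (inferInstance : MeasurableSpace (Fin k → ℝ))
          (Fin.cons (inferInstance : MeasurableSpace (Fin k → ℝ)) finZeroElim)))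
      (Fin.cons X (Fin.cons V (Fin.cons Vt finZeroElim))) μ)
    {h : (Fin d → ℝ) × (Fin k → ℝ) → ℝ} (hh : Measurable h)
    {Y Z : Ω → ℝ} (hY : Y = fun ω => h (X ω, V ω)) (hZ : Z = fun ω => h (X ω, Vt ω))
    {fbar : (Fin d → ℝ) → ℝ} (hfbar_meas : Measurable fbar)
    (hfbar : (fun ω => fbar (X ω)) =ᵐ[μ] μ[Y | MeasurableSpace.comap X inferInstance])
    (hY2 : Integrable (fun ω => (Y ω) ^ 2) μ)
    {fhat : (Fin d → ℝ) → ℝ} (hfhat_meas : Measurable fhat)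
    (hfhat2 : Integrable (fun ω => (fhat (X ω)) ^ 2) μ) :
    ∫ ω, (fhat (X ω) - fbar (X ω)) ^ 2 ∂μ
      = ∫ ω, Y ω * Z ω + fhat (X ω) * (fhat (X ω) - Y ω - Z ω) ∂μ := by
  subst hY hZ
  set μX := μ.map X with hμXdef
  set μV := μ.map V with hμVdef
  haveI : IsProbabilityMeasure μX := Measure.isProbabilityMeasure_map hX.aemeasurable
  haveI : IsProbabilityMeasure μV := Measure.isProbabilityMeasure_map hV.aemeasurable
  -- independence facts
  have hIVVt : IndepFun V Vt μ := h_indep.indepFun (show (1 : Fin 3) ≠ 2 by decide)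
  have hIXV : IndepFun X V μ := h_indep.indepFun (show (0 : Fin 3) ≠ 1 by decide)
  have hIXVt : IndepFun X Vt μ := h_indep.indepFun (show (0 : Fin 3) ≠ 2 by decide)
  have hIXpair : IndepFun X (fun ω => (V ω, Vt ω)) μ := by
    have hp : IndepFun (fun ω => (V ω, Vt ω)) X μ := by
      refine iIndepFun.indepFun_prodMk h_indep ?_ 1 2 0 (by decide) (by decide)
      intro i
      refine Fin.cases ?_ (fun j => ?_) i
      · exact hX
      · refine Fin.cases ?_ (fun l => ?_) j
        · exact hV
        · refine Fin.cases ?_ (fun l' => l'.elim0) l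
          exact hVt
    exact hp.symm
  -- pushforward identities
  have hmapVVt : μ.map (fun ω => (V ω, Vt ω)) = μV.prod μV := by
    rw [(indepFun_iff_map_prod_eq_prod_map_map hV.aemeasurable hVt.aemeasurable).mp hIVVt,
      h_ident]
  have hmapXV : μ.map (fun ω => (X ω, V ω)) = μX.prod μV :=
    (indepFun_iff_map_prod_eq_prod_map_map hX.aemeasurable hV.aemeasurable).mp hIXV
  have hmapXVt : μ.map (fun ω => (X ω, Vt ω)) = μX.prod μV := by
    rw [(indepFun_iff_map_prod_eq_prod_map_map hX.aemeasurable hVt.aemeasurable).mp hIXVt,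
      h_ident]
  have hmap3 : μ.map (fun ω => (X ω, (V ω, Vt ω))) = μX.prod (μV.prod μV) := by
    rw [(indepFun_iff_map_prod_eq_prod_map_map hX.aemeasurable
      (hV.prodMk hVt).aemeasurable).mp hIXpair, hmapVVt]
  -- L² facts
  have hYm : Measurable (fun ω => h (X ω, V ω)) := hh.comp (hX.prodMk hV)
  have hZm : Measurable (fun ω => h (X ω, Vt ω)) := hh.comp (hX.prodMk hVt)
  have hYL2 : MemLp (fun ω => h (X ω, V ω)) 2 μ :=
    (memLp_two_iff_integrable_sq hYm.aestronglyMeasurable).mpr hY2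
  have hhL2 : MemLp h 2 (μX.prod μV) := by
    rw [← hmapXV, memLp_map_measure_iff hh.aestronglyMeasurable (hX.prodMk hV).aemeasurable]
    exact hYL2
  have hZL2 : MemLp (fun ω => h (X ω, Vt ω)) 2 μ := by
    have := (memLp_map_measure_iff hh.aestronglyMeasurable
      (hX.prodMk hVt).aemeasurable).mp (by rw [hmapXVt]; exact hhL2)
    exact this
  have haL2 : MemLp (fun ω => fhat (X ω)) 2 μ :=
    (memLp_two_iff_integrable_sq (hfhat_meas.comp hX).aestronglyMeasurable).mpr hfhat2
  have hfhatL2X : MemLp fhat 2 μX := by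
    rw [memLp_map_measure_iff hfhat_meas.aestronglyMeasurable hX.aemeasurable]
    exact haL2
  have hhint : Integrable h (μX.prod μV) := hhL2.integrable one_le_two
  -- the function g
  set g : (Fin d → ℝ) → ℝ := fun x => ∫ v, h (x, v) ∂μV with hgdef
  have hgsm : StronglyMeasurable g := hh.stronglyMeasurable.integral_prod_right'
  have hgm : Measurable g := hgsm.measurable
  have hgL1 : Integrable g μX := hhint.integral_prod_left
  -- integrability of products on product spaces
  have hT1m : Measurable (fun p : (Fin d → ℝ) × ((Fin k → ℝ) × (Fin k → ℝ)) => (p.1, p.2.1)) :=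
    measurable_fst.prodMk (measurable_snd.fst)
  have hT2m : Measurable (fun p : (Fin d → ℝ) × ((Fin k → ℝ) × (Fin k → ℝ)) => (p.1, p.2.2)) :=
    measurable_fst.prodMk (measurable_snd.snd)
  have hT1map : (μX.prod (μV.prod μV)).map
      (fun p => (p.1, p.2.1)) = μX.prod μV := by
    have he : (fun p : (Fin d → ℝ) × ((Fin k → ℝ) × (Fin k → ℝ)) => (p.1, p.2.1))
        = Prod.map id Prod.fst := rfl
    rw [he, ← Measure.map_prod_map _ _ measurable_id measurable_fst, Measure.map_id,
      Measure.map_fst_prod]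
    simp
  have hT2map : (μX.prod (μV.prod μV)).map
      (fun p => (p.1, p.2.2)) = μX.prod μV := by
    have he : (fun p : (Fin d → ℝ) × ((Fin k → ℝ) × (Fin k → ℝ)) => (p.1, p.2.2))
        = Prod.map id Prod.snd := rfl
    rw [he, ← Measure.map_prod_map _ _ measurable_id measurable_snd, Measure.map_id,
      Measure.map_snd_prod]
    simp
  have hh1L2 : MemLp (fun p : (Fin d → ℝ) × ((Fin k → ℝ) × (Fin k → ℝ)) => h (p.1, p.2.1)) 2
      (μX.prod (μV.prod μV)) := by
    have := (memLp_map_measure_iff hh.aestronglyMeasurable hT1m.aemeasurable).mp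
      (by rw [hT1map]; exact hhL2)
    exact this
  have hh2L2 : MemLp (fun p : (Fin d → ℝ) × ((Fin k → ℝ) × (Fin k → ℝ)) => h (p.1, p.2.2)) 2
      (μX.prod (μV.prod μV)) := by
    have := (memLp_map_measure_iff hh.aestronglyMeasurable hT2m.aemeasurable).mp
      (by rw [hT2map]; exact hhL2)
    exact this
  have hF3int : Integrable
      (fun p : (Fin d → ℝ) × ((Fin k → ℝ) × (Fin k → ℝ)) => h (p.1, p.2.1) * h (p.1, p.2.2))
      (μX.prod (μV.prod μV)) := integrable_mul_of_memL2 hh1L2 hh2L2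
  have hfstL2 : MemLp (fun p : (Fin d → ℝ) × (Fin k → ℝ) => fhat p.1) 2 (μX.prod μV) := by
    have h1 : MemLp fhat 2 ((μX.prod μV).map Prod.fst) := by
      rw [Measure.map_fst_prod]; simpa using hfhatL2X
    exact (memLp_map_measure_iff hfhat_meas.aestronglyMeasurable
      measurable_fst.aemeasurable).mp h1
  have hF2int : Integrable (fun p : (Fin d → ℝ) × (Fin k → ℝ) => fhat p.1 * h p)
      (μX.prod μV) := integrable_mul_of_memL2 hfstL2 hhL2
  -- integrability over μX
  have hg2int : Integrable (fun x => g x * g x) μX := by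
    refine hF3int.integral_prod_left.congr (Filter.Eventually.of_forall fun x => ?_)
    show ∫ q : (Fin k → ℝ) × (Fin k → ℝ), h (x, q.1) * h (x, q.2) ∂(μV.prod μV) = g x * g x
    exact integral_prod_mul (fun v => h (x, v)) (fun w => h (x, w))
  have hfgint : Integrable (fun x => fhat x * g x) μX := by
    refine hF2int.integral_prod_left.congr (Filter.Eventually.of_forall fun x => ?_)
    show ∫ v, fhat x * h (x, v) ∂μV = fhat x * g x
    exact integral_const_mul _ _
  have hf2intX : Integrable (fun x => fhat x * fhat x) μX := by
    simpa [pow_two] using hfhatL2X.integrable_sq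
  -- identification of fbar∘X with g∘X
  have hm : MeasurableSpace.comap X inferInstance ≤ (inferInstance : MeasurableSpace Ω) :=
    hX.comap_le
  have hYL1 : Integrable (fun ω => h (X ω, V ω)) μ := hYL2.integrable one_le_two
  have hGint : Integrable (fun ω => g (X ω)) μ := by
    have := (integrable_map_measure hgsm.aestronglyMeasurable hX.aemeasurable).mp
      (by rw [← hμXdef]; exact hgL1)
    exact this
  have hGcond : (fun ω => g (X ω)) =ᵐ[μ]
      μ[(fun ω => h (X ω, V ω)) | MeasurableSpace.comap X inferInstance] := by
    refine ae_eq_condExp_of_forall_setIntegral_eq hm hYL1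
      (fun s _ _ => hGint.integrableOn) (fun s hs _ => ?_) ?_
    · obtain ⟨B, hB, rfl⟩ := hs
      have e1 : ∫ ω in X ⁻¹' B, g (X ω) ∂μ = ∫ x in B, g x ∂μX := by
        rw [hμXdef, setIntegral_map hB hgsm.aestronglyMeasurable hX.aemeasurable]
      have epre : X ⁻¹' B = (fun ω => (X ω, V ω)) ⁻¹' (B ×ˢ Set.univ) := by
        ext ω; simp
      have e2 : ∫ ω in X ⁻¹' B, h (X ω, V ω) ∂μ
          = ∫ p in B ×ˢ Set.univ, h p ∂(μX.prod μV) := by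
        rw [← hmapXV, setIntegral_map (hB.prod MeasurableSet.univ) hh.aestronglyMeasurable
          (hX.prodMk hV).aemeasurable, ← epre]
      have e3 : ∫ p in B ×ˢ Set.univ, h p ∂(μX.prod μV) = ∫ x in B, g x ∂μX := by
        rw [setIntegral_prod _ hhint.integrableOn]
        simp [hgdef]
      rw [e1, e2, e3]
    · refine StronglyMeasurable.aestronglyMeasurable ?_
      exact hgsm.comp_measurable (measurable_iff_comap_le.mpr le_rfl)
  have hfbarG : (fun ω => fbar (X ω)) =ᵐ[μ] fun ω => g (X ω) := hfbar.trans hGcond.symm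
  -- integral identities
  have hm3 : Measurable (fun p : (Fin d → ℝ) × ((Fin k → ℝ) × (Fin k → ℝ)) =>
      h (p.1, p.2.1) * h (p.1, p.2.2)) := ((hh.comp hT1m).mul (hh.comp hT2m))
  have hm2 : Measurable (fun p : (Fin d → ℝ) × (Fin k → ℝ) => fhat p.1 * h p) :=
    ((hfhat_meas.comp measurable_fst).mul hh)
  have key1 : ∫ ω, h (X ω, V ω) * h (X ω, Vt ω) ∂μ = ∫ x, g x * g x ∂μX := by
    have e1 : ∫ ω, h (X ω, V ω) * h (X ω, Vt ω) ∂μ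
        = ∫ p, h (p.1, p.2.1) * h (p.1, p.2.2) ∂(μX.prod (μV.prod μV)) := by
      rw [← hmap3, integral_map (hX.prodMk (hV.prodMk hVt)).aemeasurable
        hm3.aestronglyMeasurable]
    rw [e1, integral_prod _ hF3int]
    refine integral_congr_ae (Filter.Eventually.of_forall fun x => ?_)
    show ∫ q : (Fin k → ℝ) × (Fin k → ℝ), h (x, q.1) * h (x, q.2) ∂(μV.prod μV) = g x * g x
    exact integral_prod_mul (fun v => h (x, v)) (fun w => h (x, w))
  have key2 : ∫ ω, fhat (X ω) * h (X ω, V ω) ∂μ = ∫ x, fhat x * g x ∂μX := by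
    have e1 : ∫ ω, fhat (X ω) * h (X ω, V ω) ∂μ
        = ∫ p : (Fin d → ℝ) × (Fin k → ℝ), fhat p.1 * h p ∂(μX.prod μV) := by
      rw [← hmapXV, integral_map (hX.prodMk hV).aemeasurable hm2.aestronglyMeasurable]
    rw [e1, integral_prod _ hF2int]
    refine integral_congr_ae (Filter.Eventually.of_forall fun x => ?_)
    show ∫ v, fhat x * h (x, v) ∂μV = fhat x * g x
    exact integral_const_mul _ _
  have key3 : ∫ ω, fhat (X ω) * h (X ω, Vt ω) ∂μ = ∫ x, fhat x * g x ∂μX := by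
    have e1 : ∫ ω, fhat (X ω) * h (X ω, Vt ω) ∂μ
        = ∫ p : (Fin d → ℝ) × (Fin k → ℝ), fhat p.1 * h p ∂(μX.prod μV) := by
      rw [← hmapXVt, integral_map (hX.prodMk hVt).aemeasurable hm2.aestronglyMeasurable]
    rw [e1, integral_prod _ hF2int]
    refine integral_congr_ae (Filter.Eventually.of_forall fun x => ?_)
    show ∫ v, fhat x * h (x, v) ∂μV = fhat x * g x
    exact integral_const_mul _ _
  have key4 : ∫ ω, fhat (X ω) * fhat (X ω) ∂μ = ∫ x, fhat x * fhat x ∂μX := by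
    rw [hμXdef]
    exact (integral_map hX.aemeasurable (hfhat_meas.mul hfhat_meas).aestronglyMeasurable).symm
  -- left-hand side
  have lhs1 : ∫ ω, (fhat (X ω) - fbar (X ω)) ^ 2 ∂μ
      = ∫ ω, (fhat (X ω) - g (X ω)) ^ 2 ∂μ := by
    refine integral_congr_ae (hfbarG.mono fun ω hω => ?_)
    simp only at hω ⊢
    rw [hω]
  have lhs2 : ∫ ω, (fhat (X ω) - g (X ω)) ^ 2 ∂μ = ∫ x, (fhat x - g x) ^ 2 ∂μX := by
    rw [hμXdef]
    exact (integral_map hX.aemeasurable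
      ((hfhat_meas.sub hgm).pow_const 2).aestronglyMeasurable).symm
  have lhs3 : ∫ x, (fhat x - g x) ^ 2 ∂μX
      = ∫ x, fhat x * fhat x ∂μX - 2 * ∫ x, fhat x * g x ∂μX + ∫ x, g x * g x ∂μX := by
    have e : (fun x => (fhat x - g x) ^ 2)
        = fun x => (fhat x * fhat x - 2 * (fhat x * g x)) + g x * g x := by
      funext x; ring
    have h2g : Integrable (fun x => 2 * (fhat x * g x)) μX := hfgint.const_mul 2
    have hsub : Integrable (fun x => fhat x * fhat x - 2 * (fhat x * g x)) μX :=
      hf2intX.sub h2g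
    rw [e, integral_add hsub hg2int, integral_sub hf2intX h2g, integral_const_mul]
  -- right-hand side
  have hYZint : Integrable (fun ω => h (X ω, V ω) * h (X ω, Vt ω)) μ :=
    integrable_mul_of_memL2 hYL2 hZL2
  have haYint : Integrable (fun ω => fhat (X ω) * h (X ω, V ω)) μ :=
    integrable_mul_of_memL2 haL2 hYL2
  have haZint : Integrable (fun ω => fhat (X ω) * h (X ω, Vt ω)) μ :=
    integrable_mul_of_memL2 haL2 hZL2
  have ha2int : Integrable (fun ω => fhat (X ω) * fhat (X ω)) μ :=
    integrable_mul_of_memL2 haL2 haL2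
  have rhs1 : ∫ ω, h (X ω, V ω) * h (X ω, Vt ω)
        + fhat (X ω) * (fhat (X ω) - h (X ω, V ω) - h (X ω, Vt ω)) ∂μ
      = ∫ ω, h (X ω, V ω) * h (X ω, Vt ω) ∂μ + (∫ ω, fhat (X ω) * fhat (X ω) ∂μ
        - ∫ ω, fhat (X ω) * h (X ω, V ω) ∂μ - ∫ ω, fhat (X ω) * h (X ω, Vt ω) ∂μ) := by
    have e : (fun ω => h (X ω, V ω) * h (X ω, Vt ω)
        + fhat (X ω) * (fhat (X ω) - h (X ω, V ω) - h (X ω, Vt ω)))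
        = fun ω => h (X ω, V ω) * h (X ω, Vt ω)
          + ((fhat (X ω) * fhat (X ω) - fhat (X ω) * h (X ω, V ω))
            - fhat (X ω) * h (X ω, Vt ω)) := by
      funext ω; ring
    have hs1 : Integrable (fun ω => fhat (X ω) * fhat (X ω) - fhat (X ω) * h (X ω, V ω)) μ :=
      ha2int.sub haYint
    have hs2 : Integrable (fun ω => (fhat (X ω) * fhat (X ω) - fhat (X ω) * h (X ω, V ω))
        - fhat (X ω) * h (X ω, Vt ω)) μ := hs1.sub haZint
    rw [e, integral_add hYZint hs2, integral_sub hs1 haZint, integral_sub ha2int haYint]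
  rw [lhs1, lhs2, lhs3, rhs1, key1, key2, key3, key4]
  ring
end

section
/- Let f : ℝ^d → ℝ be a Borel function with ∫ f² dν_X < ∞ that is continuous at a point x₀ ∈ ℝ^d. Let (ν_n)_{n≥1} be Borel probability measures on ℝ^d given by dν_n/dν_X = p_n for Borel functions p_n : ℝ^d → [0,∞) satisfying ∫ p_n dν_X = 1 for all n ≥ 1 and sup{ p_n(x) : ‖x − x₀‖₂ > 1/n } → 0 as n → ∞. Then the L²(ν_n)-norms converge: √(∫ f² dν_n) → |f(x₀)| as n → ∞. -/
open MeasureTheory Filter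

set_option maxHeartbeats 1000000

/-- If `f` is Borel with `∫ f² dν_X < ∞` and continuous at `x₀`, and `ν_n` are probability
measures with densities `p_n` w.r.t. `ν_X` such that `∫ p_n dν_X = 1` and
`sup{p_n(x) : ‖x − x₀‖₂ > 1/n} → 0`, then `‖f‖_{L²(ν_n)} → |f(x₀)|`. -/
theorem stmt_9 {d : ℕ} (νX : Measure (EuclideanSpace ℝ (Fin d))) [IsProbabilityMeasure νX]
    {f : EuclideanSpace ℝ (Fin d) → ℝ} (hf_meas : Measurable f)
    (hf2 : Integrable (fun x => (f x) ^ 2) νX)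
    {x₀ : EuclideanSpace ℝ (Fin d)} (hf_cont : ContinuousAt f x₀)
    {p : ℕ → EuclideanSpace ℝ (Fin d) → ℝ} (hp_meas : ∀ n, Measurable (p n))
    (hp_nonneg : ∀ n x, 0 ≤ p n x)
    {ν : ℕ → Measure (EuclideanSpace ℝ (Fin d))}
    (hν : ∀ n, ν n = νX.withDensity (fun x => ENNReal.ofReal (p n x)))
    (hp_int : ∀ n, ∫ x, p n x ∂νX = 1)
    (hp_sup : ∀ ε > 0, ∃ N : ℕ, ∀ n ≥ N, ∀ x, ‖x - x₀‖ > 1 / (n : ℝ) → p n x ≤ ε) :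
    Tendsto (fun n => Real.sqrt (∫ x, (f x) ^ 2 ∂(ν n))) atTop (nhds |f x₀|) := by
  -- each p n is integrable
  have hpint : ∀ n, Integrable (p n) νX := by
    intro n
    by_contra h
    have := hp_int n
    rw [integral_undef h] at this
    norm_num at this
  -- rewrite the integral over ν n
  have hrw : ∀ n, ∫ x, (f x) ^ 2 ∂(ν n) = ∫ x, p n x * (f x) ^ 2 ∂νX := by
    intro n
    rw [hν n]
    have heq : (fun x => ENNReal.ofReal (p n x))
        = fun x => ((Real.toNNReal (p n x) : NNReal) : ENNReal) := by
      funext x; simp [ENNReal.ofReal]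
    rw [heq, integral_withDensity_eq_integral_smul ((hp_meas n).real_toNNReal)]
    congr 1
    funext x
    simp [NNReal.smul_def, Real.coe_toNNReal _ (hp_nonneg n x)]
  set c := (f x₀) ^ 2 with hc
  have hc0 : 0 ≤ c := sq_nonneg _
  set I := ∫ x, (f x) ^ 2 ∂νX with hI
  have hI0 : 0 ≤ I := integral_nonneg fun x => sq_nonneg _
  have hmain : Tendsto (fun n => ∫ x, p n x * (f x) ^ 2 ∂νX) atTop (nhds c) := by
    rw [Metric.tendsto_atTop]
    intro ε hε
    obtain ⟨δ, hδ0, hδ⟩ := Metric.continuousAt_iff.mp (hf_cont.pow 2) (ε / 4) (by positivity)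
    set ε' := (ε / 4) / (I + c + 1) with hε'
    have hε'0 : 0 < ε' := by positivity
    obtain ⟨N₁, hN₁⟩ := hp_sup ε' hε'0
    obtain ⟨N₂, hN₂⟩ := exists_nat_gt (1 / δ)
    refine ⟨max N₁ (N₂ + 1), fun n hn => ?_⟩
    have hn1 : N₁ ≤ n := le_trans (le_max_left _ _) hn
    have hn2 : N₂ + 1 ≤ n := le_trans (le_max_right _ _) hn
    have hn0 : 0 < n := lt_of_lt_of_le (Nat.succ_pos N₂) hn2
    have hnpos : (0 : ℝ) < n := by exact_mod_cast hn0
    have hNn : (1 : ℝ) / δ < n := by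
      refine lt_of_lt_of_le hN₂ ?_
      exact_mod_cast le_trans (Nat.le_succ N₂) hn2
    have hnδ : 1 / (n : ℝ) < δ := (one_div_lt hnpos hδ0).mpr hNn
    have hcase : ∀ x, (p n x ≤ ε') ∨ (|(f x) ^ 2 - c| < ε / 4 ∧ (f x) ^ 2 ≤ c + ε / 4) := by
      intro x
      by_cases hx : ‖x - x₀‖ > 1 / (n : ℝ)
      · exact Or.inl (hN₁ n hn1 x hx)
      · right
        have hdist : dist x x₀ < δ := by
          rw [dist_eq_norm]; exact lt_of_le_of_lt (not_lt.mp hx) hnδ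
        have h := hδ hdist
        rw [Real.dist_eq] at h
        rw [hc]
        exact ⟨h, by have h' := (abs_lt.mp h).2; simp only [Pi.pow_apply] at h'; linarith⟩
    have hbound_int : Integrable (fun x => (c + ε / 4) * p n x + ε' * (f x) ^ 2) νX :=
      ((hpint n).const_mul _).add (hf2.const_mul _)
    have hg_int : Integrable (fun x => p n x * (f x) ^ 2) νX := by
      refine hbound_int.mono'
        (((hp_meas n).mul (hf_meas.pow_const 2)).aestronglyMeasurable) ?_
      filter_upwards with x
      have h1 : 0 ≤ p n x * (f x) ^ 2 := mul_nonneg (hp_nonneg n x) (sq_nonneg _)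
      rw [Real.norm_eq_abs, abs_of_nonneg h1]
      rcases hcase x with h | h
      · have h2 := mul_le_mul_of_nonneg_right h (sq_nonneg (f x))
        nlinarith [hp_nonneg n x, sq_nonneg (f x), hε.le]
      · have h2 := mul_le_mul_of_nonneg_left h.2 (hp_nonneg n x)
        nlinarith [sq_nonneg (f x), hε'0.le]
    have hsub : ∫ x, p n x * (f x) ^ 2 ∂νX - c = ∫ x, p n x * ((f x) ^ 2 - c) ∂νX := by
      have h := integral_sub hg_int ((hpint n).mul_const c)
      simp_rw [mul_sub]
      rw [h, integral_mul_const, hp_int n, one_mul]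
    have hnorm : |∫ x, p n x * ((f x) ^ 2 - c) ∂νX| ≤ ∫ x, |p n x * ((f x) ^ 2 - c)| ∂νX := by
      exact
        norm_integral_le_integral_norm (fun x => p n x * ((f x) ^ 2 - c)) (μ := νX)
    have hRHS_int : Integrable (fun x => ε / 4 * p n x + ε' * ((f x) ^ 2 + c)) νX :=
      ((hpint n).const_mul _).add ((hf2.add (integrable_const c)).const_mul _)
    have hmono : ∫ x, |p n x * ((f x) ^ 2 - c)| ∂νX
        ≤ ∫ x, ε / 4 * p n x + ε' * ((f x) ^ 2 + c) ∂νX := by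
      refine integral_mono_of_nonneg (Filter.Eventually.of_forall fun x => abs_nonneg _)
        hRHS_int (Filter.Eventually.of_forall fun x => ?_)
      dsimp only
      rw [abs_mul, abs_of_nonneg (hp_nonneg n x)]
      rcases hcase x with h | h
      · have habs : |(f x) ^ 2 - c| ≤ (f x) ^ 2 + c :=
          abs_le.mpr ⟨by nlinarith [sq_nonneg (f x)], by linarith⟩
        have h2 := mul_le_mul_of_nonneg_right h (abs_nonneg ((f x) ^ 2 - c))
        have h3 := mul_le_mul_of_nonneg_left habs hε'0.le
        nlinarith [hp_nonneg n x, hε.le]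
      · have h2 := mul_le_mul_of_nonneg_left h.1.le (hp_nonneg n x)
        nlinarith [hε'0.le, sq_nonneg (f x)]
    have hInt2 : Integrable (fun x => (f x) ^ 2 + c) νX := hf2.add (integrable_const c)
    have h1 : ∫ x, ((f x) ^ 2 + c) ∂νX = I + c := by
      rw [integral_add hf2 (integrable_const c), integral_const]
      simp [← hI]
    have hval : ∫ x, ε / 4 * p n x + ε' * ((f x) ^ 2 + c) ∂νX = ε / 4 + ε' * (I + c) := by
      rw [integral_add ((hpint n).const_mul _) (hInt2.const_mul _),
        integral_const_mul, integral_const_mul, hp_int n, h1, mul_one]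
    have hfin : ε' * (I + c) ≤ ε / 4 := by
      rw [hε', div_mul_eq_mul_div, div_le_iff₀ (by positivity)]
      nlinarith [hI0, hc0, hε.le]
    rw [Real.dist_eq]
    calc |∫ x, p n x * (f x) ^ 2 ∂νX - c|
        = |∫ x, p n x * ((f x) ^ 2 - c) ∂νX| := by rw [hsub]
      _ ≤ ∫ x, |p n x * ((f x) ^ 2 - c)| ∂νX := hnorm
      _ ≤ ε / 4 + ε' * (I + c) := hmono.trans_eq hval
      _ < ε := by linarith
  have htend : Tendsto (fun n => ∫ x, (f x) ^ 2 ∂(ν n)) atTop (nhds c) := by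
    simp_rw [hrw]; exact hmain
  have hsq := (Real.continuous_sqrt.continuousAt (x := c)).tendsto.comp htend
  have : Real.sqrt c = |f x₀| := by rw [hc, Real.sqrt_sq_eq_abs]
  simpa [Function.comp_def, this] using hsq
end

section
/- Let f : ℝ^d → ℝ be a Borel function with ∫ f² dν_X < ∞ that is continuous at a point x₀ ∈ ℝ^d. Let (ν_n)_{n≥1} be Borel probability measures on ℝ^d given by dν_n/dν_X = p_n for Borel functions p_n : ℝ^d → [0,∞) satisfying ∫ p_n dν_X = 1 for all n ≥ 1 and sup{ p_n(x) : ‖x − x₀‖₂ > 1/n } → 0 as n → ∞. Then ∫ (f(x) − f(x₀))² dν_n(x) → 0 as n → ∞. -/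
open MeasureTheory Filter

/-- If `f` is Borel with `∫ f² dν_X < ∞` and continuous at `x₀`, and `ν_n` are probability
measures with densities `p_n` w.r.t. `ν_X` such that `∫ p_n dν_X = 1` and
`sup{p_n(x) : ‖x − x₀‖₂ > 1/n} → 0`, then `∫ (f(x) − f(x₀))² dν_n(x) → 0`. -/
theorem stmt_10 {d : ℕ} (νX : Measure (EuclideanSpace ℝ (Fin d))) [IsProbabilityMeasure νX]
    {f : EuclideanSpace ℝ (Fin d) → ℝ} (hf_meas : Measurable f)
    (hf2 : Integrable (fun x => (f x) ^ 2) νX)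
    {x₀ : EuclideanSpace ℝ (Fin d)} (hf_cont : ContinuousAt f x₀)
    {p : ℕ → EuclideanSpace ℝ (Fin d) → ℝ} (hp_meas : ∀ n, Measurable (p n))
    (hp_nonneg : ∀ n x, 0 ≤ p n x)
    {ν : ℕ → Measure (EuclideanSpace ℝ (Fin d))}
    (hν : ∀ n, ν n = νX.withDensity (fun x => ENNReal.ofReal (p n x)))
    (hp_int : ∀ n, ∫ x, p n x ∂νX = 1)
    (hp_sup : ∀ ε > 0, ∃ N : ℕ, ∀ n ≥ N, ∀ x, ‖x - x₀‖ > 1 / (n : ℝ) → p n x ≤ ε) :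
    Tendsto (fun n => ∫ x, (f x - f x₀) ^ 2 ∂(ν n)) atTop (nhds 0) := by
  set g : EuclideanSpace ℝ (Fin d) → ℝ := fun x => (f x - f x₀) ^ 2 with hg_def
  have hg_nonneg : ∀ x, 0 ≤ g x := fun x => sq_nonneg _
  have hf_int : Integrable f νX := by
    refine (hf2.add (integrable_const 1)).mono' hf_meas.aestronglyMeasurable ?_
    filter_upwards with x
    have : |f x| ≤ f x ^ 2 + 1 := by nlinarith [sq_nonneg (|f x| - 1), sq_abs (f x)]
    simpa using this
  have hg_int : Integrable g νX := by
    have h1 : Integrable (fun x => f x ^ 2 - 2 * f x₀ * f x + f x₀ ^ 2) νX :=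
      (hf2.sub (hf_int.const_mul _)).add (integrable_const _)
    refine h1.congr (Filter.Eventually.of_forall fun x => ?_)
    simp only [hg_def]; ring
  have hpn_int : ∀ n, Integrable (p n) νX := by
    intro n
    by_contra h
    have := hp_int n
    rw [integral_undef h] at this
    exact absurd this (by norm_num)
  have key : ∀ n, ∫ x, g x ∂(ν n) = ∫ x, p n x * g x ∂νX := by
    intro n
    rw [hν n]
    simp only [ENNReal.ofReal]
    rw [integral_withDensity_eq_integral_smul (hp_meas n).real_toNNReal g]
    congr 1
    funext x
    simp [NNReal.smul_def, Real.coe_toNNReal _ (hp_nonneg n x)]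
  have hIg_nonneg : 0 ≤ ∫ x, g x ∂νX := integral_nonneg hg_nonneg
  rw [Metric.tendsto_atTop]
  intro ε hε
  set C : ℝ := ∫ x, g x ∂νX + 1 with hC_def
  have hC : 0 < C := by linarith
  obtain ⟨δ, hδpos, hδ⟩ :=
    Metric.continuousAt_iff.mp ((hf_cont.sub (continuousAt_const : ContinuousAt (fun _ => f x₀) x₀)).pow 2) (ε/4) (by linarith)
  obtain ⟨N₁, hN₁⟩ := hp_sup (ε/(4*C)) (by positivity)
  obtain ⟨N₂, hN₂⟩ := exists_nat_one_div_lt hδpos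
  refine ⟨max N₁ (N₂ + 1), fun n hn => ?_⟩
  have hn1 : N₁ ≤ n := le_trans (le_max_left _ _) hn
  have hn2 : N₂ + 1 ≤ n := le_trans (le_max_right _ _) hn
  have hnpos : (0:ℝ) < (n:ℝ) := by
    have : 0 < n := lt_of_lt_of_le (Nat.succ_pos _) hn2
    exact_mod_cast this
  have hinv : 1 / (n:ℝ) < δ := by
    refine lt_of_le_of_lt ?_ hN₂
    apply one_div_le_one_div_of_le
    · positivity
    · exact_mod_cast hn2
  have hpt : ∀ x, p n x * g x ≤ (ε/4) * p n x + (ε/(4*C)) * g x := by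
    intro x
    by_cases hx : ‖x - x₀‖ ≤ 1 / (n:ℝ)
    · have hd : dist x x₀ < δ := by
        rw [dist_eq_norm]; exact lt_of_le_of_lt hx hinv
      have h2 := hδ hd
      simp only [Real.dist_eq, Pi.pow_apply, Pi.sub_apply, sub_self] at h2
      have hgx : g x < ε/4 := by
        have : |(f x - f x₀) ^ 2 - 0 ^ 2| = g x := by
          simp [hg_def, abs_of_nonneg (sq_nonneg (f x - f x₀))]
        rw [this] at h2; exact h2
      have h3 : p n x * g x ≤ p n x * (ε/4) :=
        mul_le_mul_of_nonneg_left hgx.le (hp_nonneg n x)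
      have h4 : 0 ≤ ε / (4 * C) * g x := mul_nonneg (by positivity) (hg_nonneg x)
      nlinarith
    · have hpx := hN₁ n hn1 x (lt_of_not_ge hx)
      have h3 : p n x * g x ≤ ε / (4 * C) * g x :=
        mul_le_mul_of_nonneg_right hpx (hg_nonneg x)
      have h4 : 0 ≤ ε / 4 * p n x := mul_nonneg (by positivity) (hp_nonneg n x)
      linarith
  have hInt1 : Integrable (fun x => (ε/4) * p n x) νX := (hpn_int n).const_mul _
  have hInt2 : Integrable (fun x => (ε/(4*C)) * g x) νX := hg_int.const_mul _
  have hle : ∫ x, p n x * g x ∂νX ≤ ε/4 + (ε/(4*C)) * ∫ x, g x ∂νX := by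
    calc ∫ x, p n x * g x ∂νX
        ≤ ∫ x, ((ε/4) * p n x + (ε/(4*C)) * g x) ∂νX := by
          refine integral_mono_of_nonneg
            (Filter.Eventually.of_forall fun x => mul_nonneg (hp_nonneg n x) (hg_nonneg x))
            (hInt1.add hInt2) (Filter.Eventually.of_forall hpt)
      _ = (ε/4) * ∫ x, p n x ∂νX + (ε/(4*C)) * ∫ x, g x ∂νX := by
          rw [integral_add hInt1 hInt2, integral_const_mul, integral_const_mul]
      _ = ε/4 + (ε/(4*C)) * ∫ x, g x ∂νX := by rw [hp_int n, mul_one]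
  have hhalf : (ε/(4*C)) * ∫ x, g x ∂νX ≤ ε/4 := by
    have h1 : (ε/(4*C)) * ∫ x, g x ∂νX ≤ (ε/(4*C)) * C :=
      mul_le_mul_of_nonneg_left (by linarith) (by positivity)
    have h2 : (ε/(4*C)) * C = ε/4 := by field_simp
    linarith
  have hfin : ∫ x, g x ∂(ν n) ≤ ε/2 := by
    rw [key n]; linarith
  have hnn : 0 ≤ ∫ x, g x ∂(ν n) := integral_nonneg hg_nonneg
  rw [Real.dist_eq, sub_zero, abs_of_nonneg hnn]
  · linarith
end

section
/- If E[Y²] < ∞, then almost surely the Monte Carlo averages converge: (1/N)·Σ_{n=1}^N Yₙ·Zₙ → E[f̄(X)²] and (1/N)·Σ_{n=1}^N Yₙ·(Yₙ − Zₙ) → E[(Y − f̄(X))²] as N → ∞, where (Xₙ, Yₙ, Zₙ) are i.i.d. copies of (X, Y, Z). -/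
open MeasureTheory ProbabilityTheory Filter

section helpers

variable {α : Type*} [MeasurableSpace α] {μ : Measure α}

lemma memL2_mul_integrable {f g : α → ℝ} (hf : MemLp f 2 μ) (hg : MemLp g 2 μ) :
    Integrable (fun x => f x * g x) μ := by
  have h := MemLp.smul (φ := g) (f := f) (r := 1) hf hg
  rw [memLp_one_iff_integrable] at h
  simpa [smul_eq_mul, mul_comm, Pi.mul_def] using h

lemma sq_integral_le_integral_sq [IsProbabilityMeasure μ] {f : α → ℝ} (hf : MemLp f 2 μ) :
    (∫ x, f x ∂μ) ^ 2 ≤ ∫ x, f x ^ 2 ∂μ := by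
  have h1 := variance_nonneg f μ
  rw [variance_eq_sub hf] at h1
  have h2 : μ[f ^ 2] = ∫ x, f x ^ 2 ∂μ := by
    apply integral_congr_ae; filter_upwards with x; simp
  linarith

end helpers

/-- If `E[Y²] < ∞`, then almost surely `N⁻¹ ∑_{n<N} Yₙ Zₙ → E[f̄(X)²]` and
`N⁻¹ ∑_{n<N} Yₙ (Yₙ − Zₙ) → E[(Y − f̄(X))²]` as `N → ∞`, where `(Xₙ, Yₙ, Zₙ)` are i.i.d.
copies of `(X, Y, Z)` and `f̄(X)` is a version of `E[Y | X]`. -/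
theorem stmt_11 {Ω : Type*} [MeasurableSpace Ω] {μ : Measure Ω} [IsProbabilityMeasure μ]
    {d k : ℕ} {X : Ω → (Fin d → ℝ)} {V Vt : Ω → (Fin k → ℝ)}
    (hX : Measurable X) (hV : Measurable V) (hVt : Measurable Vt)
    (h_ident : Measure.map Vt μ = Measure.map V μ)
    (h_indep : iIndepFun
      (β := Fin.cons (Fin d → ℝ) (Fin.cons (Fin k → ℝ) (Fin.cons (Fin k → ℝ) finZeroElim)))
      (m := Fin.cons (inferInstance : MeasurableSpace (Fin d → ℝ))
        (Fin.cons (inferInstance : MeasurableSpace (Fin k → ℝ))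
          (Fin.cons (inferInstance : MeasurableSpace (Fin k → ℝ)) finZeroElim)))
      (Fin.cons X (Fin.cons V (Fin.cons Vt finZeroElim))) μ)
    {h : (Fin d → ℝ) × (Fin k → ℝ) → ℝ} (hh : Measurable h)
    {Y Z : Ω → ℝ} (hY : Y = fun ω => h (X ω, V ω)) (hZ : Z = fun ω => h (X ω, Vt ω))
    {fbar : (Fin d → ℝ) → ℝ} (hfbar_meas : Measurable fbar)
    (hfbar : (fun ω => fbar (X ω)) =ᵐ[μ] μ[Y | MeasurableSpace.comap X inferInstance])
    {Xs : ℕ → Ω → (Fin d → ℝ)} {Ys Zs : ℕ → Ω → ℝ}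
    (hXs : ∀ n, Measurable (Xs n)) (hYs : ∀ n, Measurable (Ys n))
    (hZs : ∀ n, Measurable (Zs n))
    (hs_indep : iIndepFun (m := fun _ => inferInstance)
      (fun n ω => (Xs n ω, Ys n ω, Zs n ω)) μ)
    (hs_ident : ∀ n, Measure.map (fun ω => (Xs n ω, Ys n ω, Zs n ω)) μ
      = Measure.map (fun ω => (X ω, Y ω, Z ω)) μ)
    (hY2 : Integrable (fun ω => (Y ω) ^ 2) μ) :
    ∀ᵐ ω ∂μ,
      Tendsto (fun N : ℕ => (N : ℝ)⁻¹ * ∑ n ∈ Finset.range N, Ys n ω * Zs n ω)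
        atTop (nhds (∫ ω', (fbar (X ω')) ^ 2 ∂μ)) ∧
      Tendsto (fun N : ℕ => (N : ℝ)⁻¹ * ∑ n ∈ Finset.range N, Ys n ω * (Ys n ω - Zs n ω))
        atTop (nhds (∫ ω', (Y ω' - fbar (X ω')) ^ 2 ∂μ)) := by
  -- basic measurability
  have hYm : Measurable Y := by rw [hY]; exact hh.comp (hX.prodMk hV)
  have hZm : Measurable Z := by rw [hZ]; exact hh.comp (hX.prodMk hVt)
  -- laws
  set ρ : Measure (Fin d → ℝ) := μ.map X with hρ
  set ν : Measure (Fin k → ℝ) := μ.map V with hν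
  haveI : IsProbabilityMeasure ρ := Measure.isProbabilityMeasure_map hX.aemeasurable
  haveI : IsProbabilityMeasure ν := Measure.isProbabilityMeasure_map hV.aemeasurable
  -- independence facts
  have hXV : IndepFun X V μ := h_indep.indepFun (show (0 : Fin 3) ≠ 1 by decide)
  have hXVt : IndepFun X Vt μ := h_indep.indepFun (show (0 : Fin 3) ≠ 2 by decide)
  have hVVt : IndepFun V Vt μ := h_indep.indepFun (show (1 : Fin 3) ≠ 2 by decide)
  have hXP : IndepFun X (fun ω => (V ω, Vt ω)) μ :=
    (h_indep.indepFun_prodMk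
      (fun i => Fin.cases hX (Fin.cases hV (Fin.cases hVt finZeroElim)) i)
      1 2 0 (by decide) (by decide)).symm
  have hlawXV : μ.map (fun ω => (X ω, V ω)) = ρ.prod ν :=
    (indepFun_iff_map_prod_eq_prod_map_map hX.aemeasurable hV.aemeasurable).1 hXV
  have hlawXVt : μ.map (fun ω => (X ω, Vt ω)) = ρ.prod ν := by
    rw [(indepFun_iff_map_prod_eq_prod_map_map hX.aemeasurable hVt.aemeasurable).1 hXVt,
      h_ident]
  have hlawVVt : μ.map (fun ω => (V ω, Vt ω)) = ν.prod ν := by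
    rw [(indepFun_iff_map_prod_eq_prod_map_map hV.aemeasurable hVt.aemeasurable).1 hVVt,
      h_ident]
  have hlawT : μ.map (fun ω => (X ω, (V ω, Vt ω))) = ρ.prod (ν.prod ν) := by
    rw [(indepFun_iff_map_prod_eq_prod_map_map hX.aemeasurable
      (hV.prodMk hVt).aemeasurable).1 hXP, hlawVVt]
  -- L² facts
  have hY2' : MemLp Y 2 μ := (memLp_two_iff_integrable_sq hYm.aestronglyMeasurable).2 hY2
  have hYint : Integrable Y μ := hY2'.integrable one_le_two
  have hh2 : Integrable (fun p => h p ^ 2) (ρ.prod ν) := by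
    rw [← hlawXV]
    refine (integrable_map_measure ?_ (hX.prodMk hV).aemeasurable).2 ?_
    · exact (hh.pow_const 2).aestronglyMeasurable
    · have he : ((fun p => h p ^ 2) ∘ fun ω => (X ω, V ω)) = fun ω => Y ω ^ 2 := by
        funext ω; simp [hY]
      rw [he]; exact hY2
  have hmh : MemLp h 2 (ρ.prod ν) :=
    (memLp_two_iff_integrable_sq hh.aestronglyMeasurable).2 hh2
  have hhint : Integrable h (ρ.prod ν) := hmh.integrable one_le_two
  have hZ2 : Integrable (fun ω => Z ω ^ 2) μ := by
    have := hh2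
    rw [← hlawXVt] at this
    have h2 := (integrable_map_measure (hh.pow_const 2).aestronglyMeasurable
      (hX.prodMk hVt).aemeasurable).1 this
    have he : ((fun p => h p ^ 2) ∘ fun ω => (X ω, Vt ω)) = fun ω => Z ω ^ 2 := by
      funext ω; simp [hZ]
    rwa [he] at h2
  have hZ2' : MemLp Z 2 μ := (memLp_two_iff_integrable_sq hZm.aestronglyMeasurable).2 hZ2
  have hYZint : Integrable (fun ω => Y ω * Z ω) μ := memL2_mul_integrable hY2' hZ2'
  -- the function g
  set g : (Fin d → ℝ) → ℝ := fun x => ∫ y, h (x, y) ∂ν with hg_def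
  have hgsm : StronglyMeasurable g := hh.stronglyMeasurable.integral_prod_right'
  have hint_sq : Integrable (fun x => ∫ y, h (x, y) ^ 2 ∂ν) ρ :=
    hh2.integral_prod_left
  have hg2 : Integrable (fun x => g x ^ 2) ρ := by
    refine Integrable.mono' hint_sq
      ((hgsm.measurable.pow_const 2).aestronglyMeasurable) ?_
    filter_upwards [hh2.prod_right_ae] with x hx
    have hmx : MemLp (fun y => h (x, y)) 2 ν :=
      (memLp_two_iff_integrable_sq
        (hh.comp measurable_prodMk_left).aestronglyMeasurable).2 hx
    have := sq_integral_le_integral_sq hmx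
    calc ‖g x ^ 2‖ = (∫ y, h (x, y) ∂ν) ^ 2 := by
          rw [Real.norm_eq_abs, abs_of_nonneg (sq_nonneg _)]
      _ ≤ ∫ y, h (x, y) ^ 2 ∂ν := this
  have hgL2 : MemLp g 2 ρ := (memLp_two_iff_integrable_sq hgsm.aestronglyMeasurable).2 hg2
  have hgint : Integrable g ρ := hgL2.integrable one_le_two
  have hgXint : Integrable (fun ω => g (X ω)) μ :=
    (integrable_map_measure hgsm.aestronglyMeasurable hX.aemeasurable).1 hgint
  -- g ∘ X is a version of the conditional expectation of Y given X
  have hgX_cond : (fun ω => g (X ω)) =ᵐ[μ] μ[Y|MeasurableSpace.comap X inferInstance] := by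
    refine ae_eq_condExp_of_forall_setIntegral_eq hX.comap_le hYint
      (fun s _ _ => hgXint.integrableOn) ?_ ?_
    · intro s hs _
      obtain ⟨A, hA, rfl⟩ := hs
      have hL : ∫ ω in X ⁻¹' A, g (X ω) ∂μ = ∫ x in A, g x ∂ρ :=
        (setIntegral_map hA hgsm.aestronglyMeasurable hX.aemeasurable).symm
      have hpre : (fun ω => (X ω, V ω)) ⁻¹' (A ×ˢ (Set.univ : Set (Fin k → ℝ)))
          = X ⁻¹' A := by
        ext ω; simp
      have hR : ∫ ω in X ⁻¹' A, Y ω ∂μ = ∫ p in A ×ˢ (Set.univ : Set (Fin k → ℝ)), h p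
          ∂(ρ.prod ν) := by
        rw [← hlawXV, setIntegral_map (hA.prod MeasurableSet.univ)
          (by rw [hlawXV]; exact hh.aestronglyMeasurable) (hX.prodMk hV).aemeasurable, hpre]
        refine setIntegral_congr_fun (hX hA) ?_
        intro ω _; simp [hY]
      have hfub : ∫ p in A ×ˢ (Set.univ : Set (Fin k → ℝ)), h p ∂(ρ.prod ν)
          = ∫ x in A, g x ∂ρ := by
        have hint' : Integrable h ((ρ.restrict A).prod ν) := by
          have he : (ρ.restrict A).prod ν = (ρ.prod ν).restrict (A ×ˢ Set.univ) := by
            rw [← Measure.prod_restrict, Measure.restrict_univ]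
          rw [he]; exact hhint.restrict
        rw [← Measure.prod_restrict A Set.univ, Measure.restrict_univ,
          integral_prod _ hint']
      rw [hL, hR, hfub]
    · exact StronglyMeasurable.aestronglyMeasurable
        (Measurable.stronglyMeasurable
          (hgsm.measurable.comp (measurable_iff_comap_le.2 le_rfl)))
  have hfg : (fun ω => fbar (X ω)) =ᵐ[μ] (fun ω => g (X ω)) := hfbar.trans hgX_cond.symm
  -- second-moment identities
  have hπ1 : Measure.map
      (fun p : (Fin d → ℝ) × ((Fin k → ℝ) × (Fin k → ℝ)) => (p.1, p.2.1))
      (ρ.prod (ν.prod ν)) = ρ.prod ν := by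
    have he : (fun p : (Fin d → ℝ) × ((Fin k → ℝ) × (Fin k → ℝ)) => (p.1, p.2.1))
        = Prod.map id Prod.fst := rfl
    rw [he, ← Measure.map_prod_map _ _ measurable_id measurable_fst]
    simp
  have hπ2 : Measure.map
      (fun p : (Fin d → ℝ) × ((Fin k → ℝ) × (Fin k → ℝ)) => (p.1, p.2.2))
      (ρ.prod (ν.prod ν)) = ρ.prod ν := by
    have he : (fun p : (Fin d → ℝ) × ((Fin k → ℝ) × (Fin k → ℝ)) => (p.1, p.2.2))
        = Prod.map id Prod.snd := rfl
    rw [he, ← Measure.map_prod_map _ _ measurable_id measurable_snd]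
    simp
  have hm1 : MemLp (fun p : (Fin d → ℝ) × ((Fin k → ℝ) × (Fin k → ℝ)) => h (p.1, p.2.1)) 2
      (ρ.prod (ν.prod ν)) := by
    have h1 := hmh; rw [← hπ1] at h1
    exact h1.comp_of_map (measurable_fst.prodMk (measurable_fst.comp measurable_snd)).aemeasurable
  have hm2 : MemLp (fun p : (Fin d → ℝ) × ((Fin k → ℝ) × (Fin k → ℝ)) => h (p.1, p.2.2)) 2
      (ρ.prod (ν.prod ν)) := by
    have h1 := hmh; rw [← hπ2] at h1
    exact h1.comp_of_map (measurable_fst.prodMk (measurable_snd.comp measurable_snd)).aemeasurable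
  have hFint : Integrable
      (fun p : (Fin d → ℝ) × ((Fin k → ℝ) × (Fin k → ℝ)) => h (p.1, p.2.1) * h (p.1, p.2.2))
      (ρ.prod (ν.prod ν)) := memL2_mul_integrable hm1 hm2
  have hIntYZ : ∫ ω, Y ω * Z ω ∂μ = ∫ x, g x ^ 2 ∂ρ := by
    have hTm : Measurable (fun ω => (X ω, (V ω, Vt ω))) := hX.prodMk (hV.prodMk hVt)
    have hFm : AEStronglyMeasurable
        (fun p : (Fin d → ℝ) × ((Fin k → ℝ) × (Fin k → ℝ)) => h (p.1, p.2.1) * h (p.1, p.2.2))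
        (Measure.map (fun ω => (X ω, (V ω, Vt ω))) μ) := by
      rw [hlawT]; exact hFint.aestronglyMeasurable
    have h1 : ∫ ω, Y ω * Z ω ∂μ
        = ∫ p : (Fin d → ℝ) × ((Fin k → ℝ) × (Fin k → ℝ)),
            h (p.1, p.2.1) * h (p.1, p.2.2) ∂(ρ.prod (ν.prod ν)) := by
      rw [← hlawT, integral_map hTm.aemeasurable hFm]
      refine integral_congr_ae (Eventually.of_forall fun ω => ?_)
      simp [hY, hZ]
    rw [h1, integral_prod _ hFint]
    refine integral_congr_ae (Eventually.of_forall fun x => ?_)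
    have h2 := integral_prod_mul (μ := ν) (ν := ν)
      (f := fun y => h (x, y)) (g := fun y => h (x, y))
    show ∫ z : (Fin k → ℝ) × (Fin k → ℝ), h (x, z.1) * h (x, z.2) ∂(ν.prod ν) = g x ^ 2
    rw [pow_two]
    exact h2
  have hmapfst : Measure.map (Prod.fst : (Fin d → ℝ) × (Fin k → ℝ) → (Fin d → ℝ))
      (ρ.prod ν) = ρ := by simp
  have hgfst : MemLp (fun p : (Fin d → ℝ) × (Fin k → ℝ) => g p.1) 2 (ρ.prod ν) := by
    have h1 := hgL2; rw [← hmapfst] at h1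
    exact h1.comp_of_map measurable_fst.aemeasurable
  have hhg_int : Integrable (fun p : (Fin d → ℝ) × (Fin k → ℝ) => h p * g p.1) (ρ.prod ν) :=
    memL2_mul_integrable hmh hgfst
  have hB : ∫ p : (Fin d → ℝ) × (Fin k → ℝ), h p * g p.1 ∂(ρ.prod ν)
      = ∫ x, g x ^ 2 ∂ρ := by
    rw [integral_prod _ hhg_int]
    refine integral_congr_ae (Eventually.of_forall fun x => ?_)
    show ∫ y, h (x, y) * g x ∂ν = g x ^ 2
    rw [integral_mul_const, pow_two]
  have hgsq_int : Integrable (fun p : (Fin d → ℝ) × (Fin k → ℝ) => g p.1 ^ 2) (ρ.prod ν) :=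
    (memLp_two_iff_integrable_sq hgfst.aestronglyMeasurable).1 hgfst
  have hgsq : ∫ p : (Fin d → ℝ) × (Fin k → ℝ), g p.1 ^ 2 ∂(ρ.prod ν)
      = ∫ x, g x ^ 2 ∂ρ := by
    conv_rhs => rw [← hmapfst]
    rw [integral_map measurable_fst.aemeasurable
      (hgsm.measurable.pow_const 2).aestronglyMeasurable]
  have hYsq_eq : ∫ p, h p ^ 2 ∂(ρ.prod ν) = ∫ ω, Y ω ^ 2 ∂μ := by
    rw [← hlawXV, integral_map (hX.prodMk hV).aemeasurable
      (hh.pow_const 2).aestronglyMeasurable]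
    refine integral_congr_ae (Eventually.of_forall fun ω => ?_)
    simp [hY]
  have hYgX : ∫ ω, (Y ω - g (X ω)) ^ 2 ∂μ = ∫ p, (h p - g p.1) ^ 2 ∂(ρ.prod ν) := by
    have hGm : AEStronglyMeasurable
        (fun p : (Fin d → ℝ) × (Fin k → ℝ) => (h p - g p.1) ^ 2)
        (Measure.map (fun ω => (X ω, V ω)) μ) :=
      ((hh.sub (hgsm.measurable.comp measurable_fst)).pow_const 2).aestronglyMeasurable
    rw [← hlawXV, integral_map (hX.prodMk hV).aemeasurable hGm]
    refine integral_congr_ae (Eventually.of_forall fun ω => ?_)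
    simp [hY]
  have hexp : ∫ ω, (Y ω - g (X ω)) ^ 2 ∂μ = ∫ ω, Y ω ^ 2 ∂μ - ∫ x, g x ^ 2 ∂ρ := by
    rw [hYgX]
    calc ∫ p, (h p - g p.1) ^ 2 ∂(ρ.prod ν)
        = ∫ p : (Fin d → ℝ) × (Fin k → ℝ),
            (h p ^ 2 - 2 * (h p * g p.1) + g p.1 ^ 2) ∂(ρ.prod ν) :=
          integral_congr_ae (Eventually.of_forall fun p => by ring)
      _ = ∫ p : (Fin d → ℝ) × (Fin k → ℝ),
            (h p ^ 2 - 2 * (h p * g p.1)) ∂(ρ.prod ν) + ∫ p : (Fin d → ℝ) × (Fin k → ℝ),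
            g p.1 ^ 2 ∂(ρ.prod ν) := by
          have hA : Integrable (fun p : (Fin d → ℝ) × (Fin k → ℝ) =>
              h p ^ 2 - 2 * (h p * g p.1)) (ρ.prod ν) := hh2.sub (hhg_int.const_mul 2)
          exact integral_add hA hgsq_int
      _ = (∫ p, h p ^ 2 ∂(ρ.prod ν) - ∫ p : (Fin d → ℝ) × (Fin k → ℝ),
            2 * (h p * g p.1) ∂(ρ.prod ν)) + ∫ p : (Fin d → ℝ) × (Fin k → ℝ),
            g p.1 ^ 2 ∂(ρ.prod ν) := by
          have hBint : Integrable (fun p : (Fin d → ℝ) × (Fin k → ℝ) =>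
              2 * (h p * g p.1)) (ρ.prod ν) := hhg_int.const_mul 2
          rw [integral_sub hh2 hBint]
      _ = (∫ p, h p ^ 2 ∂(ρ.prod ν) - 2 * ∫ p : (Fin d → ℝ) × (Fin k → ℝ),
            h p * g p.1 ∂(ρ.prod ν)) + ∫ p : (Fin d → ℝ) × (Fin k → ℝ),
            g p.1 ^ 2 ∂(ρ.prod ν) := by
          rw [integral_const_mul]
      _ = ∫ ω, Y ω ^ 2 ∂μ - ∫ x, g x ^ 2 ∂ρ := by
          rw [hYsq_eq, hB, hgsq]; ring
  -- rewrite the target integrals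
  have hfbar_sq : ∫ ω', fbar (X ω') ^ 2 ∂μ = ∫ x, g x ^ 2 ∂ρ := by
    have h1 : ∫ ω', fbar (X ω') ^ 2 ∂μ = ∫ ω', g (X ω') ^ 2 ∂μ := by
      refine integral_congr_ae ?_
      filter_upwards [hfg] with ω hw
      rw [hw]
    have h2 : ∫ ω', g (X ω') ^ 2 ∂μ = ∫ x, g x ^ 2 ∂ρ := by
      rw [hρ]
      exact (integral_map hX.aemeasurable
        (hgsm.measurable.pow_const 2).aestronglyMeasurable).symm
    rw [h1, h2]
  have hres_sq : ∫ ω', (Y ω' - fbar (X ω')) ^ 2 ∂μ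
      = ∫ ω, Y ω ^ 2 ∂μ - ∫ x, g x ^ 2 ∂ρ := by
    have h1 : ∫ ω', (Y ω' - fbar (X ω')) ^ 2 ∂μ = ∫ ω', (Y ω' - g (X ω')) ^ 2 ∂μ := by
      refine integral_congr_ae ?_
      filter_upwards [hfg] with ω hw
      rw [hw]
    rw [h1, hexp]
  have hYYZint : Integrable (fun ω => Y ω * (Y ω - Z ω)) μ := by
    have he : (fun ω => Y ω * (Y ω - Z ω)) = fun ω => Y ω ^ 2 - Y ω * Z ω :=
      funext fun ω => by ring
    rw [he]; exact hY2.sub hYZint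
  have hIntYYZ : ∫ ω, Y ω * (Y ω - Z ω) ∂μ = ∫ ω, Y ω ^ 2 ∂μ - ∫ x, g x ^ 2 ∂ρ := by
    have he : (fun ω => Y ω * (Y ω - Z ω)) = fun ω => Y ω ^ 2 - Y ω * Z ω :=
      funext fun ω => by ring
    rw [he, integral_sub hY2 hYZint, hIntYZ]
  -- SLLN
  have hφ1m : Measurable (fun p : (Fin d → ℝ) × ℝ × ℝ => p.2.1 * p.2.2) :=
    (measurable_fst.comp measurable_snd).mul (measurable_snd.comp measurable_snd)
  have hφ2m : Measurable (fun p : (Fin d → ℝ) × ℝ × ℝ => p.2.1 * (p.2.1 - p.2.2)) :=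
    (measurable_fst.comp measurable_snd).mul
      ((measurable_fst.comp measurable_snd).sub (measurable_snd.comp measurable_snd))
  have htm : ∀ n, Measurable (fun ω => (Xs n ω, Ys n ω, Zs n ω)) :=
    fun n => (hXs n).prodMk ((hYs n).prodMk (hZs n))
  have htm0 : Measurable (fun ω => (X ω, Y ω, Z ω)) := hX.prodMk (hYm.prodMk hZm)
  have hid : ∀ n, IdentDistrib (fun ω => (Xs n ω, Ys n ω, Zs n ω))
      (fun ω => (X ω, Y ω, Z ω)) μ μ :=
    fun n => ⟨(htm n).aemeasurable, htm0.aemeasurable, hs_ident n⟩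
  have hW1id : ∀ n, IdentDistrib (fun ω => Ys n ω * Zs n ω) (fun ω => Y ω * Z ω) μ μ :=
    fun n => (hid n).comp hφ1m
  have hW2id : ∀ n, IdentDistrib (fun ω => Ys n ω * (Ys n ω - Zs n ω))
      (fun ω => Y ω * (Y ω - Z ω)) μ μ :=
    fun n => (hid n).comp hφ2m
  have hW1int : Integrable (fun ω => Ys 0 ω * Zs 0 ω) μ := (hW1id 0).integrable_iff.2 hYZint
  have hW2int : Integrable (fun ω => Ys 0 ω * (Ys 0 ω - Zs 0 ω)) μ :=
    (hW2id 0).integrable_iff.2 hYYZint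
  have hW1 := strong_law_ae (μ := μ) (fun n ω => Ys n ω * Zs n ω) hW1int
    (fun i j hij => (hs_indep.indepFun hij).comp hφ1m hφ1m)
    (fun i => (hW1id i).trans (hW1id 0).symm)
  have hW2 := strong_law_ae (μ := μ) (fun n ω => Ys n ω * (Ys n ω - Zs n ω)) hW2int
    (fun i j hij => (hs_indep.indepFun hij).comp hφ2m hφ2m)
    (fun i => (hW2id i).trans (hW2id 0).symm)
  have hlim1 : ∫ ω, Ys 0 ω * Zs 0 ω ∂μ = ∫ ω', fbar (X ω') ^ 2 ∂μ := by
    rw [(hW1id 0).integral_eq, hIntYZ, hfbar_sq]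
  have hlim2 : ∫ ω, Ys 0 ω * (Ys 0 ω - Zs 0 ω) ∂μ = ∫ ω', (Y ω' - fbar (X ω')) ^ 2 ∂μ := by
    rw [(hW2id 0).integral_eq, hIntYYZ, hres_sq]
  filter_upwards [hW1, hW2] with ω h1 h2
  constructor
  · rw [← hlim1]
    simpa [smul_eq_mul] using h1
  · rw [← hlim2]
    simpa [smul_eq_mul] using h2
end

section
/- Let ρ be a probability measure on ℝ^d × ℝ (the joint law of (X, Y)), let X have law equal to the first marginal of ρ, and let U be a random variable uniformly distributed on (0,1) and independent of X. Define g(x, u) = inf{ y ∈ ℝ : G(x, y) ≥ u }, where G(x, ·) is the conditional cumulative distribution function of the second coordinate given the first coordinate equals x (a regular version of y ↦ ρ-conditional probability of (−∞, y] given x). Then the pair (X, g(X, U)) has law ρ; in particular, every square-integrable Y admits a representation Y' = h(X, V) in distribution with V uniform on (0,1) independent of X. -/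
open MeasureTheory ProbabilityTheory Filter

lemma quantile_le_iff' {F : ℝ → ℝ} (hmono : Monotone F)
    (hrc : ∀ y, ContinuousWithinAt F (Set.Ici y) y)
    (hbot : Tendsto F atBot (nhds 0)) (htop : Tendsto F atTop (nhds 1))
    {u : ℝ} (hu0 : 0 < u) (hu1 : u < 1) (y : ℝ) :
    sInf {z : ℝ | u ≤ F z} ≤ y ↔ u ≤ F y := by
  set S : Set ℝ := {z : ℝ | u ≤ F z} with hS
  have hne : S.Nonempty := by
    obtain ⟨z, hz⟩ := (htop.eventually (eventually_ge_nhds hu1)).exists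
    exact ⟨z, hz⟩
  obtain ⟨w, hw⟩ := (hbot.eventually (eventually_lt_nhds hu0)).exists
  have hbdd : BddBelow S := by
    refine ⟨w, fun z hz => ?_⟩
    by_contra h
    push_neg at h
    exact absurd (hz.trans (hmono h.le)) (not_le.2 hw)
  constructor
  · intro h
    have hsub : S ⊆ Set.Ici (sInf S) := fun z hz => csInf_le hbdd hz
    have hcl : sInf S ∈ closure S := csInf_mem_closure hne hbdd
    haveI : (nhdsWithin (sInf S) S).NeBot := mem_closure_iff_nhdsWithin_neBot.mp hcl
    have htend : Tendsto F (nhdsWithin (sInf S) S) (nhds (F (sInf S))) :=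
      (hrc (sInf S)).mono_left (nhdsWithin_mono _ hsub)
    have hle : u ≤ F (sInf S) :=
      ge_of_tendsto htend (Filter.eventually_of_mem self_mem_nhdsWithin fun z hz => hz)
    exact hle.trans (hmono h)
  · intro h
    exact csInf_le hbdd h

lemma restrict_Ioo_Iic (t : ℝ) (ht0 : 0 ≤ t) (ht1 : t ≤ 1) :
    (volume.restrict (Set.Ioo (0:ℝ) 1)) (Set.Iic t) = ENNReal.ofReal t := by
  rw [Measure.restrict_apply measurableSet_Iic]
  rcases lt_or_eq_of_le ht1 with h | h
  · have : Set.Iic t ∩ Set.Ioo (0:ℝ) 1 = Set.Ioc 0 t := by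
      ext u
      constructor
      · rintro ⟨h1, h2, h3⟩; exact ⟨h2, h1⟩
      · rintro ⟨h1, h2⟩; exact ⟨h2, h1, lt_of_le_of_lt h2 h⟩
    rw [this, Real.volume_Ioc, sub_zero]
  · subst h
    have : Set.Iic (1:ℝ) ∩ Set.Ioo (0:ℝ) 1 = Set.Ioo 0 1 := by
      ext u
      constructor
      · rintro ⟨h1, h2, h3⟩; exact ⟨h2, h3⟩
      · rintro ⟨h1, h2⟩; exact ⟨h2.le, h1, h2⟩
    rw [this, Real.volume_Ioo, sub_zero, ENNReal.ofReal_one]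

/-- Let `ρ` be the joint law of `(X,Y)` on `ℝ^d × ℝ`, let `X` have law the first marginal
of `ρ`, and let `U` be uniform on `(0,1)` and independent of `X`. If `G` is a conditional
cumulative distribution function of the second coordinate given the first (measurable in
`x`, a right-continuous nondecreasing distribution function in `y`, with
`ρ(A × (−∞,y]) = ∫_A G(x,y) dμ(x)` for the first marginal `μ`), and
`g(x,u) = inf{y : G(x,y) ≥ u}`, then `(X, g(X,U))` has law `ρ`. -/
theorem stmt_18 {Ω : Type*} [MeasurableSpace Ω] {μ : Measure Ω} [IsProbabilityMeasure μ]
    {d : ℕ} (ρ : Measure ((Fin d → ℝ) × ℝ)) [IsProbabilityMeasure ρ]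
    {X : Ω → (Fin d → ℝ)} {U : Ω → ℝ}
    (hX : Measurable X) (hU : Measurable U)
    (hXlaw : Measure.map X μ = ρ.fst)
    (hUlaw : Measure.map U μ = volume.restrict (Set.Ioo (0 : ℝ) 1))
    (h_indep : IndepFun X U μ)
    {G : (Fin d → ℝ) → ℝ → ℝ}
    (hG_meas : ∀ y, Measurable fun x => G x y)
    (hG_mem : ∀ x y, G x y ∈ Set.Icc (0 : ℝ) 1)
    (hG_mono : ∀ x, Monotone (G x))
    (hG_rightCont : ∀ x y, ContinuousWithinAt (G x) (Set.Ici y) y)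
    (hG_bot : ∀ x, Tendsto (G x) atBot (nhds 0))
    (hG_top : ∀ x, Tendsto (G x) atTop (nhds 1))
    (hG_cdf : ∀ A : Set (Fin d → ℝ), MeasurableSet A → ∀ y : ℝ,
      ρ (A ×ˢ Set.Iic y) = ∫⁻ x in A, ENNReal.ofReal (G x y) ∂ρ.fst)
    {g : (Fin d → ℝ) → ℝ → ℝ}
    (hg : ∀ x u, g x u = sInf {y : ℝ | u ≤ G x y}) :
    Measure.map (fun ω => (X ω, g (X ω) (U ω))) μ = ρ := by
  -- key iff
  have hkey : ∀ x : Fin d → ℝ, ∀ u : ℝ, u ∈ Set.Ioo (0:ℝ) 1 → ∀ y : ℝ,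
      (g x u ≤ y ↔ u ≤ G x y) := by
    intro x u hu y
    rw [hg]
    exact quantile_le_iff' (hG_mono x) (hG_rightCont x) (hG_bot x) (hG_top x) hu.1 hu.2 y
  -- U lands in (0,1) a.e.
  have hSc : μ (U ⁻¹' (Set.Ioo (0:ℝ) 1)ᶜ) = 0 := by
    rw [← Measure.map_apply hU measurableSet_Ioo.compl, hUlaw,
      Measure.restrict_apply measurableSet_Ioo.compl, Set.compl_inter_self, measure_empty]
  have hae : ∀ᵐ ω ∂μ, U ω ∈ Set.Ioo (0:ℝ) 1 := by
    rw [ae_iff]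
    exact hSc
  -- measurable modification
  set f' : Ω → ℝ := fun ω => if U ω ∈ Set.Ioo (0:ℝ) 1 then g (X ω) (U ω) else 0 with hf'
  have hf'_meas : Measurable f' := by
    apply measurable_of_Iic
    intro y
    have hset : f' ⁻¹' Set.Iic y =
        ((U ⁻¹' Set.Ioo (0:ℝ) 1) ∩ {ω | U ω ≤ G (X ω) y}) ∪
        ((U ⁻¹' Set.Ioo (0:ℝ) 1)ᶜ ∩ {ω | (0:ℝ) ≤ y}) := by
      ext ω
      simp only [Set.mem_preimage, Set.mem_Iic, Set.mem_union, Set.mem_inter_iff,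
        Set.mem_compl_iff, Set.mem_setOf_eq, hf']
      by_cases h : U ω ∈ Set.Ioo (0:ℝ) 1
      · rw [if_pos h]
        simp [h, hkey (X ω) (U ω) h y]
      · rw [if_neg h]
        simp [h]
    rw [hset]
    have hmS : MeasurableSet (U ⁻¹' Set.Ioo (0:ℝ) 1) := hU measurableSet_Ioo
    have hm1 : MeasurableSet {ω | U ω ≤ G (X ω) y} :=
      measurableSet_le hU ((hG_meas y).comp hX)
    have hm2 : MeasurableSet {ω : Ω | (0:ℝ) ≤ y} := MeasurableSet.const _
    exact (hmS.inter hm1).union (hmS.compl.inter hm2)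
  have hFmeas : Measurable fun ω => (X ω, f' ω) := hX.prodMk hf'_meas
  -- reduce to f'
  have hcongr : Measure.map (fun ω => (X ω, g (X ω) (U ω))) μ
      = Measure.map (fun ω => (X ω, f' ω)) μ := by
    apply Measure.map_congr
    filter_upwards [hae] with ω h
    simp only [hf']
    rw [if_pos h]
  rw [hcongr]
  -- law of the pair (X, U)
  have hpair : Measure.map (fun ω => (X ω, U ω)) μ
      = (ρ.fst).prod (volume.restrict (Set.Ioo (0:ℝ) 1)) := by
    have := (indepFun_iff_map_prod_eq_prod_map_map hX.aemeasurable hU.aemeasurable).mp h_indep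
    rw [hXlaw, hUlaw] at this
    exact this
  -- π-system extensionality
  have hgen : (Prod.instMeasurableSpace : MeasurableSpace ((Fin d → ℝ) × ℝ)) =
      MeasurableSpace.generateFrom
        (Set.image2 (· ×ˢ ·) {A : Set (Fin d → ℝ) | MeasurableSet A}
          (Set.range Set.Iic)) := by
    refine (generateFrom_eq_prod MeasurableSpace.generateFrom_measurableSet ?_
      isCountablySpanning_measurableSet ?_).symm
    · exact ((BorelSpace.measurable_eq (α := ℝ)).trans (borel_eq_generateFrom_Iic ℝ)).symm
    · refine ⟨fun n => Set.Iic (n : ℝ), fun n => ⟨(n : ℝ), rfl⟩, ?_⟩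
      ext x
      simp only [Set.mem_iUnion, Set.mem_Iic, Set.mem_univ, iff_true]
      exact exists_nat_ge x
  haveI : IsProbabilityMeasure (Measure.map (fun ω => (X ω, f' ω)) μ) :=
    Measure.isProbabilityMeasure_map hFmeas.aemeasurable
  refine MeasureTheory.ext_of_generate_finite _ hgen
    (IsPiSystem.prod MeasurableSpace.isPiSystem_measurableSet isPiSystem_Iic) ?_ (by simp)
  rintro s ⟨A, hA, t, ⟨y, rfl⟩, rfl⟩
  replace hA : MeasurableSet A := hA
  -- compute lhs
  rw [Measure.map_apply hFmeas (hA.prod measurableSet_Iic)]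
  have hpre : (fun ω => (X ω, f' ω)) ⁻¹' (A ×ˢ Set.Iic y)
      = {ω | X ω ∈ A ∧ f' ω ≤ y} := rfl
  rw [hpre]
  have haeq : {ω | X ω ∈ A ∧ f' ω ≤ y} =ᵐ[μ] {ω | X ω ∈ A ∧ U ω ≤ G (X ω) y} := by
    rw [Filter.eventuallyEq_set]
    filter_upwards [hae] with ω h
    simp only [Set.mem_setOf_eq, hf']
    rw [if_pos h, hkey (X ω) (U ω) h y]
  rw [measure_congr haeq]
  have hTm : MeasurableSet {p : (Fin d → ℝ) × ℝ | p.1 ∈ A ∧ p.2 ≤ G p.1 y} :=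
    (measurable_fst hA).inter (measurableSet_le measurable_snd ((hG_meas y).comp measurable_fst))
  have : {ω | X ω ∈ A ∧ U ω ≤ G (X ω) y}
      = (fun ω => (X ω, U ω)) ⁻¹' {p : (Fin d → ℝ) × ℝ | p.1 ∈ A ∧ p.2 ≤ G p.1 y} := rfl
  rw [this, ← Measure.map_apply (hX.prodMk hU) hTm, hpair]
  rw [Measure.prod_apply hTm]
  have hslice : ∀ x : Fin d → ℝ,
      (volume.restrict (Set.Ioo (0:ℝ) 1)) (Prod.mk x ⁻¹' {p : (Fin d → ℝ) × ℝ | p.1 ∈ A ∧ p.2 ≤ G p.1 y})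
      = A.indicator (fun x => ENNReal.ofReal (G x y)) x := by
    intro x
    by_cases hx : x ∈ A
    · have : Prod.mk x ⁻¹' {p : (Fin d → ℝ) × ℝ | p.1 ∈ A ∧ p.2 ≤ G p.1 y} = Set.Iic (G x y) := by
        ext u; simp [hx]
      rw [this, restrict_Ioo_Iic _ (hG_mem x y).1 (hG_mem x y).2, Set.indicator_of_mem hx]
    · have : Prod.mk x ⁻¹' {p : (Fin d → ℝ) × ℝ | p.1 ∈ A ∧ p.2 ≤ G p.1 y} = ∅ := by
        ext u; simp [hx]
      rw [this, measure_empty, Set.indicator_of_notMem hx]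
  rw [hG_cdf A hA y, ← lintegral_indicator hA (fun x => ENNReal.ofReal (G x y))]
  exact lintegral_congr hslice
end
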